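/- Let H = S(G,a,b) be a shortest path graph and let U be a vertex of H with the unique vertex-path property, with (a,b)-geodesics in G having at least two index levels. Let S be the one-sum of H and a clique Kₙ formed by identifying U with a vertex of Kₙ. Then S is a shortest path graph; moreover a base graph G' for S can be built from G with the same number of index levels, in which every vertex of H other than U that had the unique vertex-path property still has it, and every new clique vertex other than the identified one has the unique vertex-path property. -/

import Mathlib

open SimpleGraph

variable {V : Type*}

/-- An `(a,b)`-geodesic in `G`: a shortest path from `a` to `b`. -/
def Geodesic (G : SimpleGraph V) (a b : V) : Type _ :=
  {p : G.Walk a b // p.IsPath ∧ p.length = G.dist a b}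

/-- The set of index levels at which two geodesics differ
(position `i` in the support list is index level `i`; position `0` is `a`). -/
def diffIndices (G : SimpleGraph V) (a b : V) (U W : Geodesic G a b) : Set ℕ :=
  {i | U.1.support[i]? ≠ W.1.support[i]?}

/-- The shortest path graph `S(G,a,b)`: vertices are the `(a,b)`-geodesics,
two geodesics being adjacent iff they differ at exactly one index level. -/
def SPG (G : SimpleGraph V) (a b : V) : SimpleGraph (Geodesic G a b) where
  Adj U W := ∃! i, i ∈ diffIndices G a b U W
  symm := ⟨by
    rintro U W ⟨i, hi, hu⟩
    exact ⟨i, Ne.symm hi, fun j hj => hu j (Ne.symm hj)⟩⟩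
  loopless := ⟨by
    rintro U ⟨i, hi, -⟩
    exact hi rfl⟩

/-- `U` has the unique vertex-path property: `U` is the unique `(a,b)`-geodesic
in `G` passing through some vertex `v`. -/
def UVP (G : SimpleGraph V) (a b : V) (U : Geodesic G a b) : Prop :=
  ∃ v : V, v ∈ U.1.support ∧ ∀ W : Geodesic G a b, v ∈ W.1.support → W = U


namespace Stmt14Aux


variable {W : Type*}

theorem getElem_of_getElem? {α : Type*} {l : List α} {i : ℕ} {x : α} (h : i < l.length)
    (hx : l[i]? = some x) : l[i]'h = x := by
  rw [List.getElem?_eq_getElem h] at hx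
  exact Option.some_injective _ hx

theorem lt_of_getElem? {α : Type*} {l : List α} {i : ℕ} {x : α} (hx : l[i]? = some x) :
    i < l.length := by
  by_contra h
  rw [List.getElem?_eq_none (by omega)] at hx
  cases hx

theorem adj_of_chain' {α : Type*} {R : α → α → Prop} {l : List α} (h : List.Chain' R l)
    {i : ℕ} {x y : α} (hx : l[i]? = some x) (hy : l[i+1]? = some y) : R x y := by
  have hi : i + 1 < l.length := lt_of_getElem? hy
  have hx' : l[i]'(by omega) = x := getElem_of_getElem? _ hx
  have hy' : l[i+1]'hi = y := getElem_of_getElem? _ hy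
  subst hx' hy'
  have := List.isChain_iff_getElem.mp h i (by omega)
  simpa only [List.get_eq_getElem] using this

theorem nodup_getElem?_inj {α : Type*} {l : List α} (hl : l.Nodup) {i j : ℕ}
    (hi : i < l.length) (hj : j < l.length) (h : l[i]? = l[j]?) : i = j := by
  rw [List.getElem?_eq_getElem hi, List.getElem?_eq_getElem hj] at h
  exact hl.getElem_inj_iff.mp (Option.some_injective _ h)

theorem walk_eq_of_support_eq {G : SimpleGraph W} :
    ∀ {a b : W} (w₁ w₂ : G.Walk a b), w₁.support = w₂.support → w₁ = w₂
  | _, _, .nil, w₂, h => by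
      cases w₂ with
      | nil => rfl
      | cons h' q =>
        exfalso
        rw [SimpleGraph.Walk.support_nil, SimpleGraph.Walk.support_cons,
          q.support_eq_cons] at h
        injection h with h1 h2
        exact List.cons_ne_nil _ _ h2.symm
  | _, _, @SimpleGraph.Walk.cons _ _ _ c _ hadj q, w₂, h => by
      cases w₂ with
      | nil =>
        exfalso
        rw [SimpleGraph.Walk.support_nil, SimpleGraph.Walk.support_cons,
          q.support_eq_cons] at h
        injection h with h1 h2
        exact List.cons_ne_nil _ _ h2
      | cons hadj' q' =>
        rename_i c'
        rw [SimpleGraph.Walk.support_cons, SimpleGraph.Walk.support_cons] at h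
        have h2 : q.support = q'.support := by injection h
        have h3 : c = c' := by
          have h4 := h2
          rw [q.support_eq_cons, q'.support_eq_cons] at h4
          injection h4 with h5 h6
        subst h3
        rw [walk_eq_of_support_eq q q' h2]

def mkWalk (G : SimpleGraph W) : ∀ (x : W) (l : List W), List.Chain G.Adj x l →
    G.Walk x ((x :: l).getLast (List.cons_ne_nil x l))
  | _, [], _ => SimpleGraph.Walk.nil.copy rfl (by simp)
  | _, y :: l, h =>
    (SimpleGraph.Walk.cons (List.chain_cons.mp h).1
      (mkWalk G y l (List.chain_cons.mp h).2)).copy rfl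
      (List.getLast_cons (List.cons_ne_nil y l)).symm

theorem support_mkWalk (G : SimpleGraph W) :
    ∀ (x : W) (l : List W) (h : List.Chain G.Adj x l), (mkWalk G x l h).support = x :: l
  | _, [], _ => by simp [mkWalk, SimpleGraph.Walk.support_copy]
  | x, y :: l, h => by
    simp only [mkWalk, SimpleGraph.Walk.support_copy, SimpleGraph.Walk.support_cons]
    exact congrArg (x :: ·) (support_mkWalk G y l _)

theorem length_mkWalk (G : SimpleGraph W) (x : W) (l : List W) (h : List.Chain G.Adj x l) :
    (mkWalk G x l h).length = l.length := by
  have := congrArg List.length (support_mkWalk G x l h)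
  rw [SimpleGraph.Walk.length_support] at this
  simpa using this

theorem support_getElem?_last {G : SimpleGraph W} {a b : W} (w : G.Walk a b) :
    w.support[w.length]? = some b := by
  have h1 : w.length < w.support.length := by rw [SimpleGraph.Walk.length_support]; omega
  have h2 : w.support[w.support.length - 1]? = some b := by
    rw [List.getElem?_eq_getElem (by omega)]
    have h3 := w.getLast_support
    rw [List.getLast_eq_getElem] at h3
    exact congrArg some h3
  calc w.support[w.length]? = w.support[w.support.length - 1]? := by
        exact congrArg (fun i => w.support[i]?)
          (by rw [SimpleGraph.Walk.length_support]; omega)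
    _ = some b := h2


theorem geo_ext {W : Type*} {G : SimpleGraph W} {a b : W} {X Y : Geodesic G a b}
    (h : X.1.support = Y.1.support) : X = Y :=
  Subtype.ext (walk_eq_of_support_eq X.1 Y.1 h)

noncomputable def mkGeo {W : Type*} (G : SimpleGraph W) (a b : W) (w : G.Walk a b)
    (h : w.length = G.dist a b) : Geodesic G a b :=
  ⟨w, w.isPath_of_length_eq_dist h, h⟩

@[simp] theorem mkGeo_val {W : Type*} (G : SimpleGraph W) (a b : W) (w : G.Walk a b)
    (h : w.length = G.dist a b) : (mkGeo G a b w h).1 = w := rfl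

theorem SPG_adj {W : Type*} (G : SimpleGraph W) (a b : W) (X Y : Geodesic G a b) :
    (SPG G a b).Adj X Y ↔ ∃! i : ℕ, X.1.support[i]? ≠ Y.1.support[i]? := Iff.rfl

theorem exists_geo_of_list {W : Type*} (G : SimpleGraph W) (a b : W) (l : List W)
    (hlen : l.length = G.dist a b + 1) (h0 : l[0]? = some a)
    (hl : l[G.dist a b]? = some b) (hch : l.Chain' G.Adj) :
    ∃ X : Geodesic G a b, X.1.support = l := by
  rcases l with _ | ⟨x, t⟩
  · simp at hlen
  · have hx : x = a := by simpa using h0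
    subst hx
    have hch' : List.Chain G.Adj x t := hch
    have hlt : G.dist x b < (x :: t).length := by simp at hlen ⊢; omega
    have hlast : (x :: t).getLast (List.cons_ne_nil _ _) = b := by
      rw [List.getLast_eq_getElem]
      exact getElem_of_getElem? (by omega)
        (by rw [show (x :: t).length - 1 = G.dist x b from by omega]; exact hl)
    have hwlen : ((mkWalk G x t hch').copy rfl hlast).length = G.dist x b := by
      rw [SimpleGraph.Walk.length_copy, length_mkWalk]
      simp at hlen; omega
    refine ⟨⟨(mkWalk G x t hch').copy rfl hlast,
      SimpleGraph.Walk.isPath_of_length_eq_dist _ hwlen, hwlen⟩, ?_⟩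
    rw [SimpleGraph.Walk.support_copy, support_mkWalk]

section Ext

variable {W : Type*} (G : SimpleGraph W) (m : ℕ) (c d u : W)

def extAdj : W ⊕ Fin m → W ⊕ Fin m → Prop
  | .inl x, .inl y => G.Adj x y
  | .inl x, .inr _ => x = c ∨ x = d
  | .inr _, .inl y => y = c ∨ y = d
  | .inr _, .inr _ => False

def Gext : SimpleGraph (W ⊕ Fin m) where
  Adj := extAdj G m c d
  symm := ⟨by
    rintro (x | x) (y | y) h
    · exact G.adj_symm h
    · exact h
    · exact h
    · exact h⟩
  loopless := ⟨by
    rintro (x | x) h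
    · exact G.irrefl h
    · exact h⟩

def homIn : G →g Gext G m c d := ⟨Sum.inl, fun {x y} h => h⟩

def homOut (hc : G.Adj c u) (hd : G.Adj u d) : Gext G m c d →g G where
  toFun := Sum.elim id fun _ => u
  map_rel' := by
    rintro (x | x) (y | y) h
    · exact h
    · rcases (h : _ ∨ _) with h | h <;> subst h
      · exact hc
      · exact hd.symm
    · rcases (h : _ ∨ _) with h | h <;> subst h
      · exact hc.symm
      · exact hd
    · exact (h : False).elim

theorem dist_ext (hc : G.Adj c u) (hd : G.Adj u d) {a b : W} (hr : G.Reachable a b) :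
    (Gext G m c d).dist (Sum.inl a) (Sum.inl b) = G.dist a b := by
  apply le_antisymm
  · obtain ⟨w, hw⟩ := hr.exists_walk_length_eq_dist
    calc (Gext G m c d).dist (Sum.inl a) (Sum.inl b) ≤ (w.map (homIn G m c d)).length :=
          SimpleGraph.dist_le _
      _ = w.length := by rw [SimpleGraph.Walk.length_map]
      _ = G.dist a b := hw
  · have hr' : (Gext G m c d).Reachable (Sum.inl a) (Sum.inl b) := by
      obtain ⟨w0⟩ := hr
      exact ⟨w0.map (homIn G m c d)⟩
    obtain ⟨w', hw'⟩ := hr'.exists_walk_length_eq_dist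
    calc G.dist a b ≤ (w'.map (homOut G m c d u hc hd)).length := SimpleGraph.dist_le _
      _ = w'.length := by rw [SimpleGraph.Walk.length_map]
      _ = (Gext G m c d).dist (Sum.inl a) (Sum.inl b) := hw'

end Ext

end Stmt14Aux

/-- the one-sum of a shortest path graph and a clique at a vertex with
the unique vertex-path property is a shortest path graph, realizable with the same
number of index levels and preserving the unique vertex-path property. -/
theorem stmt_14 {V : Type u} (G : SimpleGraph V) (a b : V) (hab : a ≠ b)
    (hlev : 3 ≤ G.dist a b) (U : Geodesic G a b) (hU : UVP G a b U) (m : ℕ) :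
    -- `S`: the one-sum of `SPG G a b` with the clique `K_{m+1}`, identifying `U`
    -- with one clique vertex; the other `m` clique vertices are the `Sum.inr i`.
    let S : SimpleGraph (Geodesic G a b ⊕ Fin m) := SimpleGraph.fromRel fun x y =>
      (∃ p q, x = Sum.inl p ∧ y = Sum.inl q ∧ (SPG G a b).Adj p q) ∨
      (∃ i, x = Sum.inl U ∧ y = Sum.inr i) ∨
      (∃ i j, x = Sum.inr i ∧ y = Sum.inr j ∧ i ≠ j)
    ∃ (V' : Type u) (G' : SimpleGraph V') (a' b' : V') (e : SPG G' a' b' ≃g S),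
      G'.dist a' b' = G.dist a b ∧
      (∀ X : Geodesic G a b, X ≠ U → UVP G a b X → UVP G' a' b' (e.symm (Sum.inl X))) ∧
      (∀ i : Fin m, UVP G' a' b' (e.symm (Sum.inr i))) := by
  classical
  intro S
  open Stmt14Aux in
  obtain ⟨v, hvU, hvuniq⟩ := hU
  -- basic facts about the support list L of U
  have hLlen : U.1.support.length = G.dist a b + 1 := by
    rw [SimpleGraph.Walk.length_support, U.2.2]
  have hLchain : List.Chain' G.Adj U.1.support := SimpleGraph.Walk.isChain_adj_support U.1
  have hLnodup : U.1.support.Nodup := U.2.1.support_nodup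
  have hL0 : U.1.support[0]? = some a := by rw [U.1.support_eq_cons]; simp
  have hLp : U.1.support[G.dist a b]? = some b := by
    have := support_getElem?_last U.1
    rwa [U.2.2] at this
  -- the position ℓ of the special vertex v
  obtain ⟨ℓ, hℓlt, hℓv⟩ := List.mem_iff_getElem.mp hvU
  have hℓq : U.1.support[ℓ]? = some v := by
    rw [List.getElem?_eq_getElem hℓlt, hℓv]
  have hℓp : ℓ ≤ G.dist a b := by omega
  -- choose the modified level ℓ'
  set ℓ' := if ℓ ≤ 1 then ℓ + 1 else ℓ - 1 with hℓ'def
  have hcases : (ℓ ≤ 1 ∧ ℓ' = ℓ + 1) ∨ (2 ≤ ℓ ∧ ℓ' = ℓ - 1) := by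
    by_cases h : ℓ ≤ 1
    · exact Or.inl ⟨h, by rw [hℓ'def, if_pos h]⟩
    · exact Or.inr ⟨by omega, by rw [hℓ'def, if_neg h]⟩
  have hℓ'1 : 1 ≤ ℓ' := by rcases hcases with ⟨h1, h2⟩ | ⟨h1, h2⟩ <;> omega
  have hℓ'p : ℓ' + 1 ≤ G.dist a b := by rcases hcases with ⟨h1, h2⟩ | ⟨h1, h2⟩ <;> omega
  have hℓℓ' : ℓ ≠ ℓ' := by rcases hcases with ⟨h1, h2⟩ | ⟨h1, h2⟩ <;> omega
  -- the three consecutive vertices c, u, d around level ℓ'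
  obtain ⟨c, hc⟩ : ∃ x, U.1.support[ℓ' - 1]? = some x :=
    ⟨_, List.getElem?_eq_getElem (by omega)⟩
  obtain ⟨u, hu⟩ : ∃ x, U.1.support[ℓ']? = some x :=
    ⟨_, List.getElem?_eq_getElem (by omega)⟩
  obtain ⟨d, hd⟩ : ∃ x, U.1.support[ℓ' + 1]? = some x :=
    ⟨_, List.getElem?_eq_getElem (by omega)⟩
  have hvloc : c = v ∨ d = v := by
    rcases hcases with ⟨h1, h2⟩ | ⟨h1, h2⟩
    · left
      have h3 : U.1.support[ℓ' - 1]? = U.1.support[ℓ]? := by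
        rw [show ℓ' - 1 = ℓ from by omega]
      rw [hc, hℓq] at h3
      exact Option.some_injective _ h3
    · right
      have h3 : U.1.support[ℓ' + 1]? = U.1.support[ℓ]? := by
        rw [show ℓ' + 1 = ℓ from by omega]
      rw [hd, hℓq] at h3
      exact Option.some_injective _ h3
  have hadjL : ∀ i (x y : V), U.1.support[i]? = some x → U.1.support[i+1]? = some y →
      G.Adj x y := fun i x y hx hy => adj_of_chain' hLchain hx hy
  have hinjL : ∀ i j, U.1.support[i]? = U.1.support[j]? → i < U.1.support.length →
      j < U.1.support.length → i = j := fun i j h hi hj => nodup_getElem?_inj hLnodup hi hj h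
  have hcu : G.Adj c u := hadjL (ℓ' - 1) c u hc (by
    rw [show ℓ' - 1 + 1 = ℓ' from by omega]; exact hu)
  have hud : G.Adj u d := hadjL ℓ' u d hu hd
  have hcd : c ≠ d := by
    intro h
    have := hinjL (ℓ' - 1) (ℓ' + 1) (by rw [hc, hd, h]) (by omega) (by omega)
    omega
  -- the extended graph
  set G' := Gext G m c d with hG'def
  set a' : V ⊕ Fin m := Sum.inl a with ha'def
  set b' : V ⊕ Fin m := Sum.inl b with hb'def
  have hreach : G.Reachable a b := ⟨U.1⟩
  have hdist : G'.dist a' b' = G.dist a b := dist_ext G m c d u hcu hud hreach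
  -- supports of geodesics have length dist+1
  have hslen : ∀ X : Geodesic G a b, X.1.support.length = G.dist a b + 1 := fun X => by
    rw [SimpleGraph.Walk.length_support, X.2.2]
  have hslen' : ∀ Y : Geodesic G' a' b', Y.1.support.length = G.dist a b + 1 := fun Y => by
    rw [SimpleGraph.Walk.length_support, Y.2.2, hdist]
  -- mapping old geodesics into the new graph
  have hmpex : ∀ X : Geodesic G a b, ∃ Y : Geodesic G' a' b',
      Y.1.support = X.1.support.map Sum.inl := by
    intro X
    have hlen : (X.1.map (homIn G m c d)).length = G'.dist a' b' := by
      rw [SimpleGraph.Walk.length_map, X.2.2, hdist]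
    exact ⟨⟨X.1.map (homIn G m c d),
      SimpleGraph.Walk.isPath_of_length_eq_dist _ hlen, hlen⟩,
      SimpleGraph.Walk.support_map _ _⟩
  choose mp hmp using hmpex
  -- the new geodesic support lists
  set M : Fin m → List (V ⊕ Fin m) :=
    fun j => (U.1.support.map Sum.inl).set ℓ' (Sum.inr j) with hMdef
  have hMlen : ∀ j, (M j).length = G.dist a b + 1 := by
    intro j; rw [hMdef]; simp [hLlen]
  have hMat : ∀ j, (M j)[ℓ']? = some (Sum.inr j) := by
    intro j; rw [hMdef]
    exact List.getElem?_set_self (by simp [hLlen]; omega)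
  have hMoff : ∀ j k, k ≠ ℓ' → (M j)[k]? = (U.1.support[k]?).map Sum.inl := by
    intro j k hk
    rw [hMdef]
    simp only []
    rw [List.getElem?_set_ne (fun h => hk h.symm), List.getElem?_map]
  -- adjacency facts in G'
  have hGrr : ∀ (j k : Fin m), ¬ G'.Adj (Sum.inr j) (Sum.inr k) := fun _ _ h => h
  -- adjacency along M j
  have hMadj : ∀ (j : Fin m) (k : ℕ) (x y : V ⊕ Fin m),
      (M j)[k]? = some x → (M j)[k+1]? = some y → G'.Adj x y := by
    intro j k x y hx hy
    have hklen : k + 1 < (M j).length := lt_of_getElem? hy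
    rw [hMlen] at hklen
    by_cases h0 : k = ℓ'
    · subst h0
      rw [hMat j] at hx
      obtain rfl : x = Sum.inr j := (Option.some_injective _ hx).symm
      rw [hMoff j (ℓ'+1) (by omega), hd] at hy
      obtain rfl : y = Sum.inl d := by simpa using hy.symm
      exact Or.inr rfl
    by_cases h1 : k + 1 = ℓ'
    · rw [h1, hMat j] at hy
      obtain rfl : y = Sum.inr j := (Option.some_injective _ hy).symm
      rw [hMoff j k (by omega), show k = ℓ' - 1 from by omega, hc] at hx
      obtain rfl : x = Sum.inl c := by simpa using hx.symm
      exact Or.inl rfl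
    · rw [hMoff j k h0] at hx
      rw [hMoff j (k+1) h1] at hy
      obtain ⟨x0, hx0⟩ : ∃ t, U.1.support[k]? = some t :=
        ⟨_, List.getElem?_eq_getElem (by omega)⟩
      obtain ⟨y0, hy0⟩ : ∃ t, U.1.support[k+1]? = some t :=
        ⟨_, List.getElem?_eq_getElem (by omega)⟩
      rw [hx0] at hx; rw [hy0] at hy
      obtain rfl : x = Sum.inl x0 := by simpa using hx.symm
      obtain rfl : y = Sum.inl y0 := by simpa using hy.symm
      exact hadjL k x0 y0 hx0 hy0
  -- M j is the support of a geodesic in G'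
  have hMex : ∀ j, ∃ Y : Geodesic G' a' b', Y.1.support = M j := by
    intro j
    apply exists_geo_of_list
    · rw [hMlen, hdist]
    · rw [hMoff j 0 (by omega), hL0]; rfl
    · rw [hdist, hMoff j (G.dist a b) (by omega), hLp]; rfl
    · unfold List.Chain'
      rw [List.isChain_iff_getElem]
      intro k hk
      rw [hMlen] at hk
      exact hMadj j k _ _ (List.getElem?_eq_getElem (by rw [hMlen]; omega))
        (List.getElem?_eq_getElem (by rw [hMlen]; omega))
  choose ext hext using hMex
  set F : Geodesic G a b ⊕ Fin m → Geodesic G' a' b' := Sum.elim mp ext with hFdef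
  have hFinl : ∀ X, F (Sum.inl X) = mp X := fun _ => rfl
  have hFinr : ∀ j, F (Sum.inr j) = ext j := fun _ => rfl
  -- injectivity of F
  have hFinj : Function.Injective F := by
    rintro (X | j) (Y | k) hF
    · rw [hFinl, hFinl] at hF
      have h1 : X.1.support.map (Sum.inl : V → V ⊕ Fin m) =
          Y.1.support.map (Sum.inl : V → V ⊕ Fin m) := by
        rw [← hmp X, ← hmp Y, hF]
      exact congrArg Sum.inl (geo_ext (List.map_injective_iff.mpr Sum.inl_injective h1))
    · exfalso
      rw [hFinl, hFinr] at hF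
      have h1 : X.1.support.map Sum.inl = M k := by rw [← hmp X, ← hext k, hF]
      have h2 : (X.1.support.map (Sum.inl : V → V ⊕ Fin m))[ℓ']? = (M k)[ℓ']? :=
        congrArg (fun l => l[ℓ']?) h1
      simp only [List.getElem?_map] at h2
      rw [hMat k] at h2
      rcases h3 : X.1.support[ℓ']? with _ | x <;> rw [h3] at h2 <;> simp at h2
    · exfalso
      rw [hFinr, hFinl] at hF
      have h1 : Y.1.support.map Sum.inl = M j := by rw [← hmp Y, ← hext j, hF.symm]
      have h2 : (Y.1.support.map (Sum.inl : V → V ⊕ Fin m))[ℓ']? = (M j)[ℓ']? :=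
        congrArg (fun l => l[ℓ']?) h1
      simp only [List.getElem?_map] at h2
      rw [hMat j] at h2
      rcases h3 : Y.1.support[ℓ']? with _ | x <;> rw [h3] at h2 <;> simp at h2
    · rw [hFinr, hFinr] at hF
      have h1 : M j = M k := by rw [← hext j, ← hext k, hF]
      have h2 : (M j)[ℓ']? = (M k)[ℓ']? := congrArg (fun l => l[ℓ']?) h1
      rw [hMat j, hMat k] at h2
      obtain rfl : j = k := by simpa using h2
      rfl
  -- classification of geodesics in G'
  have hclass : ∀ Y : Geodesic G' a' b', (∃ X, Y = mp X) ∨ (∃ j, Y = ext j) := by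
    intro Y
    have hNlen : Y.1.support.length = G.dist a b + 1 := hslen' Y
    have hNnodup : Y.1.support.Nodup := Y.2.1.support_nodup
    have hNchain := SimpleGraph.Walk.isChain_adj_support Y.1
    have hN0 : Y.1.support[0]? = some a' := by rw [Y.1.support_eq_cons]; simp
    have hNp : Y.1.support[G.dist a b]? = some b' := by
      have h9 := support_getElem?_last Y.1
      have h10 : Y.1.length = G.dist a b := by rw [Y.2.2, hdist]
      calc Y.1.support[G.dist a b]? = Y.1.support[Y.1.length]? := by rw [h10]
        _ = some b' := h9
    obtain hca | hca := Classical.em (∀ s ∈ Y.1.support, ∃ x : V, s = Sum.inl x)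
    · left
      have hlenW : (Y.1.map (homOut G m c d u hcu hud)).length = G.dist a b := by
        rw [SimpleGraph.Walk.length_map, Y.2.2, hdist]
      refine ⟨mkGeo G a b (Y.1.map (homOut G m c d u hcu hud)) hlenW, ?_⟩
      apply geo_ext
      rw [hmp]
      show Y.1.support = ((Y.1.map (homOut G m c d u hcu hud)).support).map Sum.inl
      rw [SimpleGraph.Walk.support_map, List.map_map]
      exact ((List.map_congr_left (fun s hs => by
        obtain ⟨x, rfl⟩ := hca s hs; rfl)).trans (List.map_id _)).symm
    · right
      push_neg at hca
      obtain ⟨s, hsN, hs⟩ := hca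
      obtain ⟨j, rfl⟩ : ∃ j, s = Sum.inr j := by
        cases s with
        | inl x => exact absurd rfl (hs x)
        | inr j => exact ⟨j, rfl⟩
      obtain ⟨i, hilt, hiv⟩ := List.mem_iff_getElem.mp hsN
      have hiq : Y.1.support[i]? = some (Sum.inr j) := by
        rw [List.getElem?_eq_getElem hilt, hiv]
      clear hs hsN hiv hilt
      have hbound : ∀ (i' : ℕ) (j' : Fin m), Y.1.support[i']? = some (Sum.inr j') →
          1 ≤ i' ∧ i' + 1 ≤ G.dist a b := by
        intro i' j' hij
        have h1 : i' < G.dist a b + 1 := by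
          have := lt_of_getElem? hij; omega
        constructor
        · rcases Nat.eq_zero_or_pos i' with rfl | h2
          · rw [hN0] at hij; simp [ha'def] at hij
          · omega
        · by_cases h2 : i' = G.dist a b
          · rw [h2, hNp] at hij; simp [hb'def] at hij
          · omega
      have hnbr : ∀ (i' : ℕ) (j' : Fin m), Y.1.support[i']? = some (Sum.inr j') →
          (Y.1.support[i'-1]? = some (Sum.inl c) ∧ Y.1.support[i'+1]? = some (Sum.inl d)) ∨
          (Y.1.support[i'-1]? = some (Sum.inl d) ∧ Y.1.support[i'+1]? = some (Sum.inl c)) := by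
        intro i' j' hij
        obtain ⟨hi1, hi2⟩ := hbound i' j' hij
        obtain ⟨s1, hs1⟩ : ∃ t, Y.1.support[i'-1]? = some t :=
          ⟨_, List.getElem?_eq_getElem (by omega)⟩
        obtain ⟨s2, hs2⟩ : ∃ t, Y.1.support[i'+1]? = some t :=
          ⟨_, List.getElem?_eq_getElem (by omega)⟩
        have ha1 : G'.Adj s1 (Sum.inr j') := adj_of_chain' hNchain hs1
          (by rw [show i' - 1 + 1 = i' from by omega]; exact hij)
        have ha2 : G'.Adj (Sum.inr j') s2 := adj_of_chain' hNchain hij hs2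
        have hne12 : s1 ≠ s2 := by
          rintro rfl
          have := nodup_getElem?_inj hNnodup (i := i'-1) (j := i'+1) (by omega) (by omega)
            (by rw [hs1, hs2])
          omega
        have h1 : s1 = Sum.inl c ∨ s1 = Sum.inl d := by
          cases s1 with
          | inl x => rcases (ha1 : x = c ∨ x = d) with h | h <;> [left; right] <;> rw [h]
          | inr k => exact (ha1 : False).elim
        have h2 : s2 = Sum.inl c ∨ s2 = Sum.inl d := by
          cases s2 with
          | inl x => rcases (ha2 : x = c ∨ x = d) with h | h <;> [left; right] <;> rw [h]
          | inr k => exact (ha2 : False).elim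
        rcases h1 with h1 | h1 <;> rcases h2 with h2 | h2
        · exact absurd (h1.trans h2.symm) hne12
        · exact Or.inl ⟨h1 ▸ hs1, h2 ▸ hs2⟩
        · exact Or.inr ⟨h1 ▸ hs1, h2 ▸ hs2⟩
        · exact absurd (h1.trans h2.symm) hne12
      have hinjN : ∀ p q : ℕ, p < G.dist a b + 1 → q < G.dist a b + 1 →
          Y.1.support[p]? = Y.1.support[q]? → p = q := fun p q hp hq h =>
        nodup_getElem?_inj hNnodup (by omega) (by omega) h
      have huniq : ∀ (i' : ℕ) (j' : Fin m), Y.1.support[i']? = some (Sum.inr j') → i' = i := by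
        intro i' j' hij
        obtain ⟨hi1, hi2⟩ := hbound i' j' hij
        obtain ⟨hh1, hh2⟩ := hbound i j hiq
        rcases hnbr i' j' hij with ⟨hb1, hb2⟩ | ⟨hb1, hb2⟩ <;>
          rcases hnbr i j hiq with ⟨hc1, hc2⟩ | ⟨hc1, hc2⟩
        · have e1 := hinjN (i'-1) (i-1) (by omega) (by omega) (by rw [hb1, hc1])
          omega
        · have e1 := hinjN (i'-1) (i+1) (by omega) (by omega) (by rw [hb1, hc2])
          have e2 := hinjN (i'+1) (i-1) (by omega) (by omega) (by rw [hb2, hc1])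
          omega
        · have e1 := hinjN (i'-1) (i+1) (by omega) (by omega) (by rw [hb1, hc2])
          have e2 := hinjN (i'+1) (i-1) (by omega) (by omega) (by rw [hb2, hc1])
          omega
        · have e1 := hinjN (i'-1) (i-1) (by omega) (by omega) (by rw [hb1, hc1])
          omega
      have hlenW : (Y.1.map (homOut G m c d u hcu hud)).length = G.dist a b := by
        rw [SimpleGraph.Walk.length_map, Y.2.2, hdist]
      set X : Geodesic G a b := mkGeo G a b (Y.1.map (homOut G m c d u hcu hud)) hlenW
        with hXdef
      have hXsupp : X.1.support = Y.1.support.map (Sum.elim id fun _ => u) := by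
        rw [hXdef]
        rw [show (X.1 : G.Walk a b) = Y.1.map (homOut G m c d u hcu hud) from rfl]
        exact SimpleGraph.Walk.support_map _ _
      have hvX : v ∈ X.1.support := by
        rw [hXsupp]
        rcases hnbr i j hiq with ⟨hb1, hb2⟩ | ⟨hb1, hb2⟩
        · rcases hvloc with rfl | rfl
          · exact List.mem_map.mpr ⟨Sum.inl c, List.mem_of_getElem? hb1, rfl⟩
          · exact List.mem_map.mpr ⟨Sum.inl d, List.mem_of_getElem? hb2, rfl⟩
        · rcases hvloc with rfl | rfl
          · exact List.mem_map.mpr ⟨Sum.inl c, List.mem_of_getElem? hb2, rfl⟩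
          · exact List.mem_map.mpr ⟨Sum.inl d, List.mem_of_getElem? hb1, rfl⟩
      have hXU : X = U := hvuniq X hvX
      have hNL : Y.1.support.map (Sum.elim id fun _ => u) = U.1.support := by
        rw [← hXsupp, hXU]
      have hiℓ' : i = ℓ' := by
        obtain ⟨hh1, hh2⟩ := hbound i j hiq
        have h1 : (Y.1.support.map (Sum.elim id fun _ => u))[i]? = U.1.support[i]? :=
          congrArg (fun l => l[i]?) hNL
        simp only [List.getElem?_map] at h1
        rw [hiq] at h1
        apply hinjL i ℓ'
        · rw [← h1, hu]; rfl
        · omega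
        · omega
      subst hiℓ'
      refine ⟨j, ?_⟩
      apply geo_ext
      rw [hext j]
      apply List.ext_getElem?
      intro k
      by_cases hk : k < G.dist a b + 1
      · by_cases hkℓ : k = ℓ'
        · subst hkℓ
          rw [hMat j]
          exact hiq
        · obtain ⟨t, ht⟩ : ∃ t, Y.1.support[k]? = some t :=
            ⟨_, List.getElem?_eq_getElem (by omega)⟩
          obtain ⟨x, rfl⟩ : ∃ x, t = Sum.inl x := by
            cases t with
            | inl x => exact ⟨x, rfl⟩
            | inr j' => exact absurd (huniq k j' ht) hkℓ
          have h1 : (Y.1.support.map (Sum.elim id fun _ => u))[k]? = U.1.support[k]? :=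
            congrArg (fun l => l[k]?) hNL
          simp only [List.getElem?_map] at h1
          rw [ht] at h1
          rw [hMoff j k hkℓ, ← h1, ht]
          rfl
      · rw [List.getElem?_eq_none (by rw [hNlen]; omega),
          List.getElem?_eq_none (by rw [hMlen]; omega)]
  -- the bijection
  have hFbij : Function.Bijective F := by
    constructor
    · exact hFinj
    · intro Y
      rcases hclass Y with ⟨X, rfl⟩ | ⟨j, rfl⟩
      · exact ⟨Sum.inl X, rfl⟩
      · exact ⟨Sum.inr j, rfl⟩
  set Feq := Equiv.ofBijective F hFbij with hFeqdef
  -- adjacency correspondence, inl-inl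
  have hdiff_ll : ∀ (X Y : Geodesic G a b) (i : ℕ),
      ((mp X).1.support[i]? ≠ (mp Y).1.support[i]?) ↔
        (X.1.support[i]? ≠ Y.1.support[i]?) := by
    intro X Y i
    rw [hmp X, hmp Y, List.getElem?_map, List.getElem?_map]
    exact (Option.map_injective Sum.inl_injective).ne_iff
  have hkey_ll : ∀ X Y : Geodesic G a b,
      (SPG G' a' b').Adj (mp X) (mp Y) ↔ (SPG G a b).Adj X Y := by
    intro X Y
    rw [SPG_adj, SPG_adj]
    exact existsUnique_congr fun i => hdiff_ll X Y i
  -- adjacency correspondence, inl-inr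
  have hkey_lr : ∀ (X : Geodesic G a b) (j : Fin m),
      (SPG G' a' b').Adj (mp X) (ext j) ↔ X = U := by
    intro X j
    rw [SPG_adj]
    constructor
    · rintro ⟨i, hi, huniq2⟩
      by_contra hXU
      have hex2 : ∃ k, k ≠ ℓ' ∧ X.1.support[k]? ≠ U.1.support[k]? := by
        by_contra h
        push_neg at h
        exact hXU (hvuniq X (List.mem_of_getElem? ((h ℓ hℓℓ').trans hℓq)))
      obtain ⟨k, hkℓ, hk⟩ := hex2
      have hd1 : (mp X).1.support[k]? ≠ (ext j).1.support[k]? := by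
        rw [hmp X, hext j, List.getElem?_map, hMoff j k hkℓ]
        exact (Option.map_injective Sum.inl_injective).ne_iff.mpr hk
      have hd2 : (mp X).1.support[ℓ']? ≠ (ext j).1.support[ℓ']? := by
        rw [hmp X, hext j, List.getElem?_map, hMat j]
        rcases h3 : X.1.support[ℓ']? with _ | x <;> simp
      exact hkℓ ((huniq2 k hd1).trans (huniq2 ℓ' hd2).symm)
    · intro hXeq
      rw [hXeq]
      refine ⟨ℓ', ?_, ?_⟩
      · show (mp U).1.support[ℓ']? ≠ (ext j).1.support[ℓ']?
        rw [hmp U, hext j, List.getElem?_map, hMat j, hu]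
        simp
      · intro y hy
        by_contra hyℓ
        apply hy
        show (mp U).1.support[y]? = (ext j).1.support[y]?
        rw [hmp U, hext j, List.getElem?_map, hMoff j y hyℓ]
  -- adjacency, inr-inr
  have hkey_rr : ∀ j k : Fin m, j ≠ k → (SPG G' a' b').Adj (ext j) (ext k) := by
    intro j k hjk
    rw [SPG_adj]
    refine ⟨ℓ', ?_, ?_⟩
    · show (ext j).1.support[ℓ']? ≠ (ext k).1.support[ℓ']?
      rw [hext j, hext k, hMat j, hMat k]
      simp only [ne_eq, Option.some.injEq, Sum.inr.injEq]
      exact hjk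
    · intro y hy
      by_contra hyℓ
      apply hy
      show (ext j).1.support[y]? = (ext k).1.support[y]?
      rw [hext j, hext k, hMoff j y hyℓ, hMoff k y hyℓ]
  -- the defining relation of S
  set R : (Geodesic G a b ⊕ Fin m) → (Geodesic G a b ⊕ Fin m) → Prop := fun x y =>
    (∃ p q, x = Sum.inl p ∧ y = Sum.inl q ∧ (SPG G a b).Adj p q) ∨
    (∃ i, x = Sum.inl U ∧ y = Sum.inr i) ∨
    (∃ i j, x = Sum.inr i ∧ y = Sum.inr j ∧ i ≠ j) with hRdef
  have hSadj : ∀ x y, S.Adj x y ↔ x ≠ y ∧ (R x y ∨ R y x) := fun x y => Iff.rfl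
  have hR_ll : ∀ X Y : Geodesic G a b, R (Sum.inl X) (Sum.inl Y) ↔ (SPG G a b).Adj X Y := by
    intro X Y; rw [hRdef]; simp
  have hR_lr : ∀ (X : Geodesic G a b) (j : Fin m), R (Sum.inl X) (Sum.inr j) ↔ X = U := by
    intro X j; rw [hRdef]; simp
  have hR_rl : ∀ (j : Fin m) (X : Geodesic G a b), R (Sum.inr j) (Sum.inl X) ↔ False := by
    intro j X; rw [hRdef]; simp
  have hR_rr : ∀ j k : Fin m, R (Sum.inr j) (Sum.inr k) ↔ j ≠ k := by
    intro j k; rw [hRdef]; simp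
  -- the master adjacency equivalence
  have hkey : ∀ s t, (SPG G' a' b').Adj (F s) (F t) ↔ S.Adj s t := by
    rintro (X | j) (Y | k)
    · rw [hFinl, hFinl, hkey_ll, hSadj, hR_ll, hR_ll]
      constructor
      · intro h
        refine ⟨?_, Or.inl h⟩
        simp only [ne_eq, Sum.inl.injEq]
        exact h.ne
      · rintro ⟨hne, h | h⟩
        · exact h
        · exact h.symm
    · rw [hFinl, hFinr, hkey_lr, hSadj, hR_lr, hR_rl]
      constructor
      · intro h
        exact ⟨by simp, Or.inl h⟩
      · rintro ⟨hne, h | h⟩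
        · exact h
        · exact h.elim
    · rw [hFinr, hFinl, SimpleGraph.adj_comm, hkey_lr, hSadj, hR_rl, hR_lr]
      constructor
      · intro h
        exact ⟨by simp, Or.inr h⟩
      · rintro ⟨hne, h | h⟩
        · exact h.elim
        · exact h
    · rw [hFinr, hFinr, hSadj, hR_rr, hR_rr]
      by_cases hjk : j = k
      · subst hjk
        exact iff_of_false ((SPG G' a' b').irrefl)
          (by rintro ⟨hne, h | h⟩ <;> exact h rfl)
      · exact iff_of_true (hkey_rr j k hjk) ⟨by simp [hjk], Or.inl hjk⟩
  -- the isomorphism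
  have hmapre : ∀ x y : Geodesic G' a' b',
      S.Adj (Feq.symm x) (Feq.symm y) ↔ (SPG G' a' b').Adj x y := by
    intro x y
    have h1 := hkey (Feq.symm x) (Feq.symm y)
    rw [show F (Feq.symm x) = x from Feq.apply_symm_apply x,
      show F (Feq.symm y) = y from Feq.apply_symm_apply y] at h1
    exact h1.symm
  let e : SPG G' a' b' ≃g S := ⟨Feq.symm, hmapre _ _⟩
  have hesymm : ∀ s, e.symm s = F s := fun s => rfl
  refine ⟨V ⊕ Fin m, G', a', b', e, hdist, ?_, ?_⟩
  · -- old geodesics keep the unique vertex-path property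
    intro X hXU hXuvp
    obtain ⟨w, hwX, hwuniq⟩ := hXuvp
    rw [hesymm, hFinl]
    refine ⟨Sum.inl w, ?_, ?_⟩
    · rw [hmp X]; exact List.mem_map_of_mem hwX
    · intro Z hZ
      rcases hclass Z with ⟨Z0, rfl⟩ | ⟨j, rfl⟩
      · rw [hmp Z0] at hZ
        obtain ⟨x0, hx0, hx0e⟩ := List.mem_map.mp hZ
        obtain rfl : x0 = w := Sum.inl_injective hx0e
        rw [hwuniq Z0 hx0]
      · exfalso
        rw [hext j] at hZ
        obtain ⟨k, hklt, hkval⟩ := List.mem_iff_getElem.mp hZ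
        have hkq : (M j)[k]? = some (Sum.inl w) := by
          rw [List.getElem?_eq_getElem hklt, hkval]
        have hkℓ : k ≠ ℓ' := by
          rintro rfl
          rw [hMat j] at hkq
          simp at hkq
        rw [hMoff j k hkℓ] at hkq
        have hwL : w ∈ U.1.support := by
          rcases hLk : U.1.support[k]? with _ | x
          · rw [hLk] at hkq; simp at hkq
          · rw [hLk] at hkq
            obtain rfl : x = w := by simpa using hkq
            exact List.mem_of_getElem? hLk
        exact hXU (hwuniq U hwL).symm
  · -- new clique vertices have the unique vertex-path property
    intro j
    rw [hesymm, hFinr]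
    refine ⟨Sum.inr j, ?_, ?_⟩
    · rw [hext j]; exact List.mem_of_getElem? (hMat j)
    · intro Z hZ
      rcases hclass Z with ⟨Z0, rfl⟩ | ⟨k, rfl⟩
      · exfalso
        rw [hmp Z0] at hZ
        obtain ⟨x0, -, hx0e⟩ := List.mem_map.mp hZ
        simp at hx0e
      · rw [hext k] at hZ
        obtain ⟨k', hk'lt, hk'val⟩ := List.mem_iff_getElem.mp hZ
        have hkq : (M k)[k']? = some (Sum.inr j) := by
          rw [List.getElem?_eq_getElem hk'lt, hk'val]
        have hk'ℓ : k' = ℓ' := by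
          by_contra hne
          rw [hMoff k k' hne] at hkq
          rcases hLk : U.1.support[k']? with _ | x <;> rw [hLk] at hkq <;> simp at hkq
        subst hk'ℓ
        rw [hMat k] at hkq
        obtain rfl : k = j := by simpa using hkq
        rfl
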